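/- Let n ≥ 1 be an integer, let T(x) = Σ_{|ℓ|<n} b_ℓ e^{iℓx} be a trigonometric polynomial of order < n with complex coefficients b_ℓ, and let N be an integer with N ≥ 4πn. Then (1/2) · sup_{x ∈ ℝ} |T(x)| ≤ max_{0 ≤ k ≤ N} | T(2πk/N) | ≤ sup_{x ∈ ℝ} |T(x)|. -/

import Mathlib

open Complex Finset

namespace TrigMesh

noncomputable def E (ℓ : ℤ) (t : ℝ) : ℂ := Complex.exp (Complex.I * ℓ * t)

lemma E_zero (t : ℝ) : E 0 t = 1 := by simp [E]

lemma E_mul (j ℓ : ℤ) (t : ℝ) : E j t * E ℓ t = E (j + ℓ) t := by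
  rw [E, E, E, ← Complex.exp_add]; congr 1; push_cast; ring

lemma E_sub (ℓ : ℤ) (x y : ℝ) : E ℓ (x - y) = E ℓ x * E (-ℓ) y := by
  rw [E, E, E, ← Complex.exp_add]; congr 1; push_cast; ring

lemma E_conj (ℓ : ℤ) (t : ℝ) : (starRingEnd ℂ) (E ℓ t) = E (-ℓ) t := by
  rw [E, ← Complex.exp_conj]; congr 1
  simp only [map_mul, Complex.conj_I, Complex.conj_ofReal, map_intCast]
  push_cast; ring

lemma E_abs (ℓ : ℤ) (t : ℝ) : ‖E ℓ t‖ = 1 := by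
  have : E ℓ t = Complex.exp (((ℓ * t : ℝ) : ℂ) * Complex.I) := by
    rw [E]; congr 1; push_cast; ring
  rw [this, Complex.norm_exp_ofReal_mul_I]

lemma orth (N : ℕ) (hN0 : 0 < N) (ℓ : ℤ) (hℓ : ℓ.natAbs < N) :
    ∑ k ∈ range N, E ℓ (2 * Real.pi * k / N) = if ℓ = 0 then (N : ℂ) else 0 := by
  by_cases h : ℓ = 0
  · simp [h, E_zero]
  · simp only [h, if_false]
    set ω : ℂ := Complex.exp (2 * Real.pi * Complex.I * ℓ / N) with hω
    have hNne : (N : ℂ) ≠ 0 := Nat.cast_ne_zero.mpr hN0.ne'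
    have hterm : ∀ k ∈ range N, E ℓ (2 * Real.pi * k / N) = ω ^ k := by
      intro k _
      rw [E, hω, ← Complex.exp_nat_mul]
      congr 1
      push_cast
      field_simp
    rw [Finset.sum_congr rfl hterm]
    have hω1 : ω ≠ 1 := by
      intro hc
      rw [hω, Complex.exp_eq_one_iff] at hc
      obtain ⟨m, hm⟩ := hc
      have h2 : (2 : ℂ) * Real.pi * Complex.I ≠ 0 := by
        simp [Real.pi_ne_zero, Complex.I_ne_zero]
      have : (ℓ : ℂ) = m * N := by
        field_simp at hm
        apply mul_left_cancel₀ h2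
        linear_combination (2 * (Real.pi : ℂ) * Complex.I) * hm
      have hz : ℓ = m * N := by exact_mod_cast this
      have hm0 : m ≠ 0 := by rintro rfl; simp at hz; exact h hz
      have : N ≤ ℓ.natAbs := by
        rw [hz, Int.natAbs_mul, Int.natAbs_natCast]
        calc N = 1 * N := (one_mul N).symm
        _ ≤ m.natAbs * N := Nat.mul_le_mul_right N (Nat.one_le_iff_ne_zero.mpr (Int.natAbs_ne_zero.mpr hm0))
      omega
    rw [geom_sum_eq hω1]
    have hωN : ω ^ N = 1 := by
      rw [hω, ← Complex.exp_nat_mul]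
      have : (N : ℂ) * (2 * Real.pi * Complex.I * ℓ / N) = ℓ * (2 * Real.pi * Complex.I) := by
        field_simp
      rw [this, Complex.exp_int_mul_two_pi_mul_I]
    rw [hωN]
    simp

lemma conv (N : ℕ) (hN0 : 0 < N) (c d : ℤ → ℂ) (A B : Finset ℤ) (hAB : A ⊆ B)
    (hdiff : ∀ j ∈ A, ∀ ℓ ∈ B, (j - ℓ).natAbs < N) (x : ℝ) :
    ∑ k ∈ range N, (∑ j ∈ A, c j * E j (2 * Real.pi * k / N)) *
        (∑ ℓ ∈ B, d ℓ * E ℓ (x - 2 * Real.pi * k / N))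
      = N * ∑ j ∈ A, c j * d j * E j x := by
  have h1 : ∀ k : ℕ, (∑ j ∈ A, c j * E j (2 * Real.pi * k / N)) *
      (∑ ℓ ∈ B, d ℓ * E ℓ (x - 2 * Real.pi * k / N))
      = ∑ j ∈ A, ∑ ℓ ∈ B, c j * d ℓ * E ℓ x * E (j - ℓ) (2 * Real.pi * k / N) := by
    intro k
    rw [Finset.sum_mul_sum]
    refine Finset.sum_congr rfl fun j _ => Finset.sum_congr rfl fun ℓ _ => ?_
    rw [E_sub, show j - ℓ = j + (-ℓ) by ring, ← E_mul]
    ring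
  calc ∑ k ∈ range N, (∑ j ∈ A, c j * E j (2 * Real.pi * k / N)) *
        (∑ ℓ ∈ B, d ℓ * E ℓ (x - 2 * Real.pi * k / N))
      = ∑ k ∈ range N, ∑ j ∈ A, ∑ ℓ ∈ B,
          c j * d ℓ * E ℓ x * E (j - ℓ) (2 * Real.pi * k / N) :=
        Finset.sum_congr rfl fun k _ => h1 k
    _ = ∑ j ∈ A, ∑ ℓ ∈ B, ∑ k ∈ range N,
          c j * d ℓ * E ℓ x * E (j - ℓ) (2 * Real.pi * k / N) := by
        rw [Finset.sum_comm]
        exact Finset.sum_congr rfl fun j _ => Finset.sum_comm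
    _ = ∑ j ∈ A, ∑ ℓ ∈ B, c j * d ℓ * E ℓ x *
          (if (j - ℓ : ℤ) = 0 then (N : ℂ) else 0) := by
        refine Finset.sum_congr rfl fun j hj => Finset.sum_congr rfl fun ℓ hℓ => ?_
        rw [← Finset.mul_sum, orth N hN0 _ (hdiff j hj ℓ hℓ)]
    _ = ∑ j ∈ A, ∑ ℓ ∈ B, (if ℓ = j then c j * d ℓ * E ℓ x * N else 0) := by
        refine Finset.sum_congr rfl fun j hj => Finset.sum_congr rfl fun ℓ hℓ => ?_
        by_cases h : ℓ = j
        · simp [h]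
        · have : j - ℓ ≠ 0 := fun hc => h (by omega)
          simp [h, this]
    _ = ∑ j ∈ A, c j * d j * E j x * N := by
        refine Finset.sum_congr rfl fun j hj => ?_
        rw [Finset.sum_ite_eq' B j (fun ℓ => c j * d ℓ * E ℓ x * N), if_pos (hAB hj)]
    _ = N * ∑ j ∈ A, c j * d j * E j x := by rw [Finset.mul_sum]; exact Finset.sum_congr rfl fun j _ => by ring

noncomputable def S (m : ℕ) (t : ℝ) : ℂ := ∑ j ∈ range m, E (j : ℤ) t
noncomputable def G (m : ℕ) (t : ℝ) : ℂ := S m t * (starRingEnd ℂ) (S m t)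

lemma G_eq_normSq (m : ℕ) (t : ℝ) : G m t = ((Complex.normSq (S m t) : ℝ) : ℂ) := by
  rw [G, Complex.mul_conj]

lemma conj_S (m : ℕ) (t : ℝ) : (starRingEnd ℂ) (S m t) = ∑ j ∈ range m, E (-(j : ℤ)) t := by
  rw [S, map_sum]
  exact Finset.sum_congr rfl fun j _ => E_conj j t

lemma sum_E_interval (m : ℕ) (t : ℝ) :
    ∑ ℓ ∈ Finset.Ioo (-(m : ℤ) - 1) ((m : ℤ) + 1), E ℓ t
      = (∑ j ∈ range m, E ((j : ℤ) - m) t) + (∑ j ∈ range m, E ((m : ℤ) - j) t) + 1 := by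
  have hinj : Function.Injective (fun j : ℕ => (j : ℤ) - m) := fun a b h => by simpa using h
  have hmap : (Finset.range (2 * m + 1)).map
      (⟨fun j : ℕ => (j : ℤ) - m, hinj⟩ : ℕ ↪ ℤ) = Finset.Ioo (-(m : ℤ) - 1) ((m : ℤ) + 1) := by
    ext ℓ
    simp only [Finset.mem_map, Finset.mem_range, Finset.mem_Ioo, Function.Embedding.coeFn_mk]
    constructor
    · rintro ⟨j, hj, rfl⟩; omega
    · intro h; exact ⟨(ℓ + m).toNat, by omega, by omega⟩
  rw [← hmap, Finset.sum_map]
  simp only [Function.Embedding.coeFn_mk]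
  rw [show 2 * m + 1 = m + (m + 1) by ring, Finset.sum_range_add]
  have h2 : ∑ j ∈ range (m + 1), E ((↑(m + j) : ℤ) - m) t = ∑ j ∈ range (m + 1), E (j : ℤ) t := by
    refine Finset.sum_congr rfl fun j _ => ?_
    congr 1; push_cast; ring
  rw [h2, Finset.sum_range_succ']
  have h3 : ∑ j ∈ range m, E ((↑(j + 1) : ℤ)) t = ∑ j ∈ range m, E ((m : ℤ) - j) t := by
    rw [← Finset.sum_range_reflect (fun j => E ((m : ℤ) - j) t) m]
    refine Finset.sum_congr rfl fun j hj => ?_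
    rw [Finset.mem_range] at hj
    congr 1; omega
  rw [h3]
  simp only [Nat.cast_zero, E_zero]
  ring

lemma G_expand (m : ℕ) (t : ℝ) :
    G m t = ∑ ℓ ∈ Finset.Ioo (-(m : ℤ)) (m : ℤ), ((m : ℤ) - |ℓ|) * E ℓ t := by
  induction m with
  | zero => simp [G, S]
  | succ m ih =>
    have hS : S (m + 1) t = S m t + E (m : ℤ) t := by rw [S, S, Finset.sum_range_succ]
    have hG : G (m + 1) t = G m t + (∑ j ∈ range m, E ((j : ℤ) - m) t)
        + (∑ j ∈ range m, E ((m : ℤ) - j) t) + 1 := by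
      rw [G, hS, map_add, E_conj, mul_add, add_mul, add_mul, ← G]
      have e1 : S m t * E (-(m : ℤ)) t = ∑ j ∈ range m, E ((j : ℤ) - m) t := by
        rw [S, Finset.sum_mul]
        refine Finset.sum_congr rfl fun j _ => ?_
        rw [E_mul, show (j : ℤ) + -(m : ℤ) = (j : ℤ) - m from by ring]
      have e2 : E (m : ℤ) t * (starRingEnd ℂ) (S m t) = ∑ j ∈ range m, E ((m : ℤ) - j) t := by
        rw [conj_S, Finset.mul_sum]
        refine Finset.sum_congr rfl fun j _ => ?_
        rw [E_mul, show (m : ℤ) + -(j : ℤ) = (m : ℤ) - j from by ring]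
      have e3 : E (m : ℤ) t * E (-(m : ℤ)) t = 1 := by rw [E_mul]; simp [E_zero]
      rw [e1, e2, e3]
      ring
    rw [hG, ih]
    -- now handle the RHS
    have hsplit : ∑ ℓ ∈ Finset.Ioo (-((m : ℤ) + 1)) ((m : ℤ) + 1), (((m : ℤ) + 1) - |ℓ|) * E ℓ t
        = (∑ ℓ ∈ Finset.Ioo (-((m : ℤ) + 1)) ((m : ℤ) + 1), ((m : ℤ) - |ℓ|) * E ℓ t)
          + ∑ ℓ ∈ Finset.Ioo (-((m : ℤ) + 1)) ((m : ℤ) + 1), E ℓ t := by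
      rw [← Finset.sum_add_distrib]
      refine Finset.sum_congr rfl fun ℓ _ => ?_
      ring
    have hext : ∑ ℓ ∈ Finset.Ioo (-((m : ℤ) + 1)) ((m : ℤ) + 1), ((m : ℤ) - |ℓ|) * E ℓ t
        = ∑ ℓ ∈ Finset.Ioo (-(m : ℤ)) (m : ℤ), ((m : ℤ) - |ℓ|) * E ℓ t := by
      symm
      refine Finset.sum_subset ?_ ?_
      · intro ℓ hℓ; rw [Finset.mem_Ioo] at *; omega
      · intro ℓ hℓ hℓ'
        rw [Finset.mem_Ioo] at hℓ
        rw [Finset.mem_Ioo] at hℓ'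
        have : ℓ = (m : ℤ) ∨ ℓ = -(m : ℤ) := by omega
        rcases this with rfl | rfl <;>
          simp [abs_neg, _root_.abs_of_nonneg (Int.natCast_nonneg m)]
    have harg : Finset.Ioo (-((m : ℕ) + 1 : ℤ)) (((m : ℕ) + 1 : ℤ))
        = Finset.Ioo (-(m : ℤ) - 1) ((m : ℤ) + 1) := by congr 1; ring
    push_cast at hsplit hext ⊢
    rw [hsplit, hext, harg, sum_E_interval]
    ring

lemma key (n N : ℕ) (hn : 1 ≤ n) (h4 : 4 * n ≤ N) (b : ℤ → ℂ) (T : ℝ → ℂ)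
    (hT : ∀ x : ℝ, T x = ∑ ℓ ∈ Finset.Ioo (-(n:ℤ)) (n:ℤ), b ℓ * E ℓ x)
    (M : ℝ) (hM : ∀ k ∈ range N, ‖T (2 * Real.pi * k / N)‖ ≤ M)
    (x : ℝ) : ‖T x‖ ≤ 2 * M := by
  have hN0 : 0 < N := by omega
  set a : ℕ := N - n + 1 with ha
  set p : ℕ := N - 2 * n + 1 with hp
  have hap : a = n + p := by omega
  have hna : n ≤ a := by omega
  have hp0 : 0 < p := by omega
  have hM0 : 0 ≤ M := le_trans (norm_nonneg _) (hM 0 (Finset.mem_range.mpr hN0))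
  have hd : ∀ (m : ℕ) (t : ℝ), G m t
      = ∑ ℓ ∈ Finset.Ioo (-(m:ℤ)) (m:ℤ), (fun ℓ : ℤ => (((m : ℤ) : ℂ) - ((|ℓ| : ℤ) : ℂ))) ℓ * E ℓ t := by
    intro m t; rw [G_expand]
  -- reproduction with G a
  have hconva : ∑ k ∈ range N, T (2 * Real.pi * k / N) * G a (x - 2 * Real.pi * k / N)
      = N * ∑ j ∈ Finset.Ioo (-(n:ℤ)) (n:ℤ), b j * (((a : ℤ) : ℂ) - ((|j| : ℤ) : ℂ)) * E j x := by
    rw [Finset.sum_congr rfl (fun k _ => by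
      rw [hT (2 * Real.pi * k / N), hd a (x - 2 * Real.pi * k / N)])]
    exact conv N hN0 b _ _ _ (Finset.Ioo_subset_Ioo (by omega) (by omega))
      (fun j hj ℓ hℓ => by rw [Finset.mem_Ioo] at hj hℓ; omega) x
  -- reproduction with G n
  have hconvn : ∑ k ∈ range N, T (2 * Real.pi * k / N) * G n (x - 2 * Real.pi * k / N)
      = N * ∑ j ∈ Finset.Ioo (-(n:ℤ)) (n:ℤ), b j * (((n : ℤ) : ℂ) - ((|j| : ℤ) : ℂ)) * E j x := by
    rw [Finset.sum_congr rfl (fun k _ => by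
      rw [hT (2 * Real.pi * k / N), hd n (x - 2 * Real.pi * k / N)])]
    exact conv N hN0 b _ _ _ (le_refl _)
      (fun j hj ℓ hℓ => by rw [Finset.mem_Ioo] at hj hℓ; omega) x
  -- the reproduction identity
  have hrepr : (N : ℂ) * (p : ℂ) * T x
      = ∑ k ∈ range N, T (2 * Real.pi * k / N) *
          (G a (x - 2 * Real.pi * k / N) - G n (x - 2 * Real.pi * k / N)) := by
    have hsplit : ∑ k ∈ range N, T (2 * Real.pi * k / N) *
          (G a (x - 2 * Real.pi * k / N) - G n (x - 2 * Real.pi * k / N))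
        = (∑ k ∈ range N, T (2 * Real.pi * k / N) * G a (x - 2 * Real.pi * k / N))
          - ∑ k ∈ range N, T (2 * Real.pi * k / N) * G n (x - 2 * Real.pi * k / N) := by
      rw [← Finset.sum_sub_distrib]
      exact Finset.sum_congr rfl fun k _ => by ring
    rw [hsplit, hconva, hconvn, ← mul_sub, ← Finset.sum_sub_distrib]
    rw [hT x, Finset.mul_sum, Finset.mul_sum]
    refine Finset.sum_congr rfl fun j hj => ?_
    have hdp : (((a : ℤ) : ℂ) - ((|j| : ℤ) : ℂ)) - (((n : ℤ) : ℂ) - ((|j| : ℤ) : ℂ)) = (p : ℂ) := by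
      push_cast [hap]; ring
    linear_combination (-(N : ℂ) * b j * E j x) * hdp
  -- discrete L1 norm of G m
  have hsum1 : ∀ m : ℕ, 0 < m → m ≤ N →
      ∑ k ∈ range N, G m (x - 2 * Real.pi * k / N) = (N : ℂ) * m := by
    intro m hm0 hmN
    have h1 : ∀ k : ℕ, G m (x - 2 * Real.pi * k / N)
        = (∑ j ∈ ({0} : Finset ℤ), (fun _ : ℤ => (1:ℂ)) j * E j (2 * Real.pi * k / N)) *
          (∑ ℓ ∈ Finset.Ioo (-(m:ℤ)) (m:ℤ),
            (fun ℓ : ℤ => (((m : ℤ) : ℂ) - ((|ℓ| : ℤ) : ℂ))) ℓ * E ℓ (x - 2 * Real.pi * k / N)) := by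
      intro k
      rw [hd m]
      simp [E_zero]
    rw [Finset.sum_congr rfl (fun k _ => h1 k),
      conv N hN0 _ _ _ _ (by simp [Finset.singleton_subset_iff, Finset.mem_Ioo]; omega)
        (fun j hj ℓ hℓ => by
          simp only [Finset.mem_singleton] at hj
          rw [Finset.mem_Ioo] at hℓ; omega) x]
    simp [E_zero]
  -- pointwise bound |G a - G n| ≤ re (G a) + re (G n)
  have habs : ∀ t : ℝ, ‖G a t - G n t‖ ≤ (G a t).re + (G n t).re := by
    intro t
    rw [G_eq_normSq a t, G_eq_normSq n t, ← Complex.ofReal_sub, Complex.norm_real, Real.norm_eq_abs,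
      Complex.ofReal_re, Complex.ofReal_re]
    rw [sub_eq_add_neg]
    refine (abs_add_le _ _).trans ?_
    rw [abs_neg, _root_.abs_of_nonneg (Complex.normSq_nonneg _), _root_.abs_of_nonneg (Complex.normSq_nonneg _)]
  -- combine
  have hfin : (N : ℝ) * p * ‖T x‖ ≤ M * ((N : ℝ) * a + (N : ℝ) * n) := by
    have h1 : (N : ℝ) * p * ‖T x‖ = ‖(N : ℂ) * (p : ℂ) * T x‖ := by
      rw [norm_mul, norm_mul, Complex.norm_natCast, Complex.norm_natCast]
    rw [h1, hrepr]
    calc ‖∑ k ∈ range N, T (2 * Real.pi * k / N) *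
            (G a (x - 2 * Real.pi * k / N) - G n (x - 2 * Real.pi * k / N))‖
        ≤ ∑ k ∈ range N, ‖T (2 * Real.pi * k / N) *
            (G a (x - 2 * Real.pi * k / N) - G n (x - 2 * Real.pi * k / N))‖ :=
          norm_sum_le _ _
      _ ≤ ∑ k ∈ range N, M * ((G a (x - 2 * Real.pi * k / N)).re
            + (G n (x - 2 * Real.pi * k / N)).re) := by
          refine Finset.sum_le_sum fun k hk => ?_
          rw [norm_mul]
          exact mul_le_mul (hM k hk) (habs _) (norm_nonneg _) hM0
      _ = M * ((∑ k ∈ range N, G a (x - 2 * Real.pi * k / N)).re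
            + (∑ k ∈ range N, G n (x - 2 * Real.pi * k / N)).re) := by
          rw [← Finset.mul_sum, Finset.sum_add_distrib, Complex.re_sum, Complex.re_sum]
      _ = M * ((N : ℝ) * a + (N : ℝ) * n) := by
          rw [hsum1 a (by omega) (by omega), hsum1 n (by omega) (by omega)]
          norm_num
  have hle : (a : ℝ) + n ≤ 2 * p := by
    have : a + n ≤ 2 * p := by omega
    exact_mod_cast this
  have hNp : (0 : ℝ) < (N : ℝ) * p := by
    have h1 : (0:ℝ) < (N:ℝ) := by exact_mod_cast hN0
    have h2 : (0:ℝ) < (p:ℝ) := by exact_mod_cast hp0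
    positivity
  have h2 : (N : ℝ) * p * ‖T x‖ ≤ (N : ℝ) * p * (2 * M) := by
    calc (N : ℝ) * p * ‖T x‖ ≤ M * ((N : ℝ) * a + (N : ℝ) * n) := hfin
      _ = M * (N : ℝ) * ((a : ℝ) + n) := by ring
      _ ≤ M * (N : ℝ) * (2 * p) := by
          refine mul_le_mul_of_nonneg_left hle ?_
          positivity
      _ = (N : ℝ) * p * (2 * M) := by ring
  exact le_of_mul_le_mul_left h2 hNp

end TrigMesh


/-- mesh-norm inequality for trigonometric polynomials of order `< n`:
if `N ≥ 4πn` then the max of `|T|` over the grid `2πk/N`, `0 ≤ k ≤ N`, is between half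
the sup norm and the sup norm of `T`. -/
theorem trig_poly_mesh_norm (n : ℕ) (hn : 1 ≤ n) (b : ℤ → ℂ) (T : ℝ → ℂ)
    (hT : ∀ x : ℝ, T x = ∑ ℓ ∈ Finset.Ioo (-(n:ℤ)) (n:ℤ),
        b ℓ * Complex.exp (Complex.I * ℓ * x))
    (N : ℕ) (hN : 4 * Real.pi * n ≤ N) :
    (1/2) * (⨆ x : ℝ, ‖T x‖)
        ≤ (Finset.Icc 0 N).sup' ⟨0, by simp⟩ (fun k => ‖T (2 * Real.pi * k / N)‖) ∧
    (Finset.Icc 0 N).sup' ⟨0, by simp⟩ (fun k => ‖T (2 * Real.pi * k / N)‖)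
        ≤ ⨆ x : ℝ, ‖T x‖ := by
  have hpi : (3 : ℝ) ≤ Real.pi := Real.pi_gt_three.le
  have h4 : 4 * n ≤ N := by
    have h1 : (4 * n : ℝ) ≤ (N : ℝ) := by nlinarith [Nat.cast_nonneg (α := ℝ) n]
    exact_mod_cast h1
  set M : ℝ := (Finset.Icc 0 N).sup' ⟨0, by simp⟩
    (fun k => ‖T (2 * Real.pi * k / N)‖) with hM
  have hMk : ∀ k ∈ Finset.range N, ‖T (2 * Real.pi * k / N)‖ ≤ M := by
    intro k hk
    rw [Finset.mem_range] at hk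
    have hk' : k ∈ Finset.Icc 0 N := by simp [Finset.mem_Icc]; omega
    rw [hM]
    exact Finset.le_sup' (fun k : ℕ => ‖T (2 * Real.pi * k / N)‖) hk'
  have hkey : ∀ x : ℝ, ‖T x‖ ≤ 2 * M :=
    TrigMesh.key n N hn h4 b T hT M hMk
  have hbdd : BddAbove (Set.range fun x : ℝ => ‖T x‖) := by
    refine ⟨2 * M, ?_⟩
    rintro y ⟨x, rfl⟩
    exact hkey x
  constructor
  · have hsup : (⨆ x : ℝ, ‖T x‖) ≤ 2 * M := ciSup_le hkey
    linarith
  · refine Finset.sup'_le _ _ fun k hk => ?_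
    exact le_ciSup hbdd (2 * Real.pi * k / N)
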